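/- Let h be a positive definite n×n complex matrix and let x be any n×n complex matrix. Then Tr(h·x*·x) ≤ ‖h^{-1/2}‖·‖h^{1/2}‖·Tr(h^{1/4}·x*·h^{1/2}·x·h^{1/4}), where ‖·‖ denotes the operator norm. -/

import Mathlib

open scoped Matrix ComplexOrder Matrix.Norms.L2Operator

/-- The positive semidefinite square root of a positive semidefinite matrix
(the definition of `Matrix.PosSemidef.sqrt` from Mathlib of December 2024, since removed). -/
noncomputable def Matrix.PosSemidef.sqrt {n 𝕜 : Type*} [Fintype n] [RCLike 𝕜] [DecidableEq n]
    {A : Matrix n n 𝕜} (hA : Matrix.PosSemidef A) : Matrix n n 𝕜 :=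
  hA.1.eigenvectorUnitary.1 * Matrix.diagonal ((↑) ∘ (√·) ∘ hA.1.eigenvalues) *
  (star hA.1.eigenvectorUnitary : Matrix n n 𝕜)

theorem Matrix.PosSemidef.posSemidef_sqrt {n 𝕜 : Type*} [Fintype n] [RCLike 𝕜] [DecidableEq n]
    {A : Matrix n n 𝕜} (hA : Matrix.PosSemidef A) : Matrix.PosSemidef hA.sqrt := by
  unfold Matrix.PosSemidef.sqrt
  refine Matrix.PosSemidef.mul_mul_conjTranspose_same ?_ _
  refine Matrix.posSemidef_diagonal_iff.mpr fun i => ?_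
  rw [Function.comp_apply, RCLike.nonneg_iff]
  constructor
  · simp only [Function.comp_apply, RCLike.ofReal_re]
    exact Real.sqrt_nonneg _
  · simp only [Function.comp_apply, RCLike.ofReal_im]

theorem Matrix.PosSemidef.sqrt_mul_self {n 𝕜 : Type*} [Fintype n] [RCLike 𝕜] [DecidableEq n]
    {A : Matrix n n 𝕜} (hA : Matrix.PosSemidef A) : hA.sqrt * hA.sqrt = A := by
  unfold Matrix.PosSemidef.sqrt
  conv_rhs => rw [hA.1.spectral_theorem, Unitary.conjStarAlgAut_apply]
  have hU : (star hA.1.eigenvectorUnitary : Matrix n n 𝕜) * hA.1.eigenvectorUnitary.1 = 1 :=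
    Unitary.coe_star_mul_self _
  simp only [Matrix.mul_assoc]
  rw [← Matrix.mul_assoc (star hA.1.eigenvectorUnitary : Matrix n n 𝕜), hU, Matrix.one_mul,
    ← Matrix.mul_assoc (Matrix.diagonal _), Matrix.diagonal_mul_diagonal]
  congr 3
  funext i
  simp only [Function.comp_apply]
  rw [← RCLike.ofReal_mul, Real.mul_self_sqrt (hA.eigenvalues_nonneg i)]


private lemma trace_nonneg_of_posSemidef {n : ℕ} {A : Matrix (Fin n) (Fin n) ℂ}
    (hA : A.PosSemidef) : 0 ≤ A.trace := by
  exact hA.trace_nonneg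

private lemma trace_mul_nonneg_of_posSemidef {n : ℕ} {A B : Matrix (Fin n) (Fin n) ℂ}
    (hA : A.PosSemidef) (hB : B.PosSemidef) : 0 ≤ (A * B).trace := by
  have hr : A = hA.sqrt * hA.sqrt := hA.sqrt_mul_self.symm
  have herm : hA.sqrt.IsHermitian := hA.posSemidef_sqrt.isHermitian
  have : (A * B).trace = (hA.sqrtᴴ * B * hA.sqrt).trace := by
    conv_rhs => rw [Matrix.trace_mul_cycle]
    rw [herm.eq, ← hr]
  rw [this]
  exact trace_nonneg_of_posSemidef (hB.conjTranspose_mul_mul_same _)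

private lemma smul_one_sub_posSemidef {n : ℕ} {A : Matrix (Fin n) (Fin n) ℂ}
    (hA : A.PosSemidef) : (((‖A‖ : ℝ) : ℂ) • 1 - A).PosSemidef := by
  rw [Matrix.posSemidef_iff_dotProduct_mulVec]
  constructor
  · rw [Matrix.IsHermitian, Matrix.conjTranspose_sub, Matrix.conjTranspose_smul,
      Matrix.conjTranspose_one, hA.1.eq, Complex.star_def, Complex.conj_ofReal]
  · intro v
    have expand : dotProduct (star v) (((((‖A‖ : ℝ) : ℂ) • 1 - A)) *ᵥ v)
        = ((‖A‖ : ℝ) : ℂ) * dotProduct (star v) v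
          - dotProduct (star v) (A *ᵥ v) := by
      rw [Matrix.sub_mulVec, dotProduct_sub, Matrix.smul_mulVec,
        Matrix.one_mulVec, dotProduct_smul, smul_eq_mul]
    rw [expand, sub_nonneg]
    set w : EuclideanSpace ℂ (Fin n) := (WithLp.equiv 2 _).symm v with hw
    have hvv : dotProduct (star v) v = ((‖w‖ ^ 2 : ℝ) : ℂ) := by
      rw [show dotProduct (star v) v = inner ℂ w w by
        rw [EuclideanSpace.inner_eq_star_dotProduct, dotProduct_comm]; rfl, inner_self_eq_norm_sq_to_K]
      norm_cast
    have hAv : dotProduct (star v) (A *ᵥ v)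
        = inner ℂ w ((WithLp.equiv 2 _).symm (A *ᵥ v)) := by
      rw [EuclideanSpace.inner_eq_star_dotProduct, dotProduct_comm]; rfl
    have hz : 0 ≤ dotProduct (star v) (A *ᵥ v) := hA.dotProduct_mulVec_nonneg v
    have hnorm : ‖dotProduct (star v) (A *ᵥ v)‖ ≤ ‖A‖ * ‖w‖ ^ 2 := by
      rw [hAv]
      calc ‖(inner ℂ w ((WithLp.equiv 2 _).symm (A *ᵥ v)) : ℂ)‖
          ≤ ‖w‖ * ‖(WithLp.equiv 2 _).symm (A *ᵥ v)‖ := norm_inner_le_norm _ _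
        _ ≤ ‖w‖ * (‖A‖ * ‖w‖) := by
            gcongr
            exact A.l2_opNorm_mulVec w
        _ = ‖A‖ * ‖w‖ ^ 2 := by ring
    rw [hvv, ← Complex.ofReal_mul, Complex.le_def]
    obtain ⟨hre, him⟩ := Complex.nonneg_iff.mp hz
    constructor
    · calc (dotProduct (star v) (A *ᵥ v)).re
          ≤ ‖dotProduct (star v) (A *ᵥ v)‖ := Complex.re_le_norm _
        _ ≤ ‖A‖ * ‖w‖ ^ 2 := hnorm
        _ = (((‖A‖ * ‖w‖ ^ 2 : ℝ) : ℂ)).re := (Complex.ofReal_re _).symm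
    · rw [Complex.ofReal_im, ← him]

theorem stmt_6 (n : ℕ) (h : Matrix (Fin n) (Fin n) ℂ) (hd : h.PosDef)
    (x : Matrix (Fin n) (Fin n) ℂ) :
    (h * xᴴ * x).trace ≤
      ((‖(hd.posSemidef.sqrt)⁻¹‖ * ‖hd.posSemidef.sqrt‖ : ℝ) : ℂ) *
        (hd.posSemidef.posSemidef_sqrt.sqrt * xᴴ * hd.posSemidef.sqrt * x *
          hd.posSemidef.posSemidef_sqrt.sqrt).trace := by
  set s : Matrix (Fin n) (Fin n) ℂ := hd.posSemidef.sqrt with hs_def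
  have hs : s.PosSemidef := hd.posSemidef.posSemidef_sqrt
  set q : Matrix (Fin n) (Fin n) ℂ := hd.posSemidef.posSemidef_sqrt.sqrt with hq_def
  have hq : q.PosSemidef := hd.posSemidef.posSemidef_sqrt.posSemidef_sqrt
  have hqq : q * q = s := hd.posSemidef.posSemidef_sqrt.sqrt_mul_self
  have hss : s * s = h := hd.posSemidef.sqrt_mul_self
  have dh : h.det ≠ 0 := hd.det_pos.ne'
  have ds : s.det ≠ 0 := by
    intro hzero
    apply dh
    rw [← hss, Matrix.det_mul, hzero, mul_zero]
  have dq : q.det ≠ 0 := by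
    intro hzero
    apply ds
    rw [← hqq, Matrix.det_mul, hzero, mul_zero]
  have invq : q⁻¹ * q = 1 := Matrix.nonsing_inv_mul q (isUnit_iff_ne_zero.mpr dq)
  have qinv : q * q⁻¹ = 1 := Matrix.mul_nonsing_inv q (isUnit_iff_ne_zero.mpr dq)
  have sinv : s⁻¹ = q⁻¹ * q⁻¹ := by rw [← hqq, Matrix.mul_inv_rev]
  have hsinvPSD : s⁻¹.PosSemidef := hs.inv
  set N : Matrix (Fin n) (Fin n) ℂ := q * x * q with hN_def
  have key0 : q * xᴴ * s * x * q = Nᴴ * N := by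
    simp only [hN_def, Matrix.conjTranspose_mul, hq.1.eq, ← hqq, Matrix.mul_assoc]
  have c1 : q⁻¹ * (q * (x * q)) = x * q := by rw [← Matrix.mul_assoc, invq, Matrix.one_mul]
  have c2 : q * (q⁻¹ * (x * q)) = x * q := by rw [← Matrix.mul_assoc, qinv, Matrix.one_mul]
  have e3 : s * (Nᴴ * (s⁻¹ * N)) = q * q * q * xᴴ * x * q := by
    rw [sinv]
    simp only [hN_def, Matrix.conjTranspose_mul, hq.1.eq, ← hqq, Matrix.mul_assoc, c1, c2]
  have e2 : (h * xᴴ * x).trace = (s * (Nᴴ * (s⁻¹ * N))).trace := by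
    rw [e3]
    have e1 : h * xᴴ * x = q * (q * q * q * xᴴ * x) := by
      rw [← hss, ← hqq]; simp only [Matrix.mul_assoc]
    rw [e1, Matrix.trace_mul_comm]
  have psdN : (Nᴴ * N).PosSemidef := Matrix.posSemidef_conjTranspose_mul_self N
  -- step A
  have hD1 : (((‖s⁻¹‖ : ℝ) : ℂ) • 1 - s⁻¹).PosSemidef := smul_one_sub_posSemidef hsinvPSD
  have hMid : (Nᴴ * ((((‖s⁻¹‖ : ℝ) : ℂ) • 1 - s⁻¹) * N)).PosSemidef := by
    rw [← Matrix.mul_assoc]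
    exact hD1.conjTranspose_mul_mul_same N
  have stepA : (s * (Nᴴ * (s⁻¹ * N))).trace
      ≤ ((‖s⁻¹‖ : ℝ) : ℂ) * (s * (Nᴴ * N)).trace := by
    have h0 : 0 ≤ (s * (Nᴴ * ((((‖s⁻¹‖ : ℝ) : ℂ) • 1 - s⁻¹) * N))).trace :=
      trace_mul_nonneg_of_posSemidef hs hMid
    have expand : s * (Nᴴ * ((((‖s⁻¹‖ : ℝ) : ℂ) • 1 - s⁻¹) * N))
        = ((‖s⁻¹‖ : ℝ) : ℂ) • (s * (Nᴴ * N)) - s * (Nᴴ * (s⁻¹ * N)) := by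
      rw [Matrix.sub_mul, Matrix.smul_mul, Matrix.one_mul, Matrix.mul_sub, Matrix.mul_sub,
        Matrix.mul_smul, Matrix.mul_smul]
    rw [expand, Matrix.trace_sub, Matrix.trace_smul, smul_eq_mul, sub_nonneg] at h0
    exact h0
  -- step B
  have hD2 : (((‖s‖ : ℝ) : ℂ) • 1 - s).PosSemidef := smul_one_sub_posSemidef hs
  have stepB : (s * (Nᴴ * N)).trace ≤ ((‖s‖ : ℝ) : ℂ) * (Nᴴ * N).trace := by
    have h0 : 0 ≤ (((((‖s‖ : ℝ) : ℂ) • 1 - s)) * (Nᴴ * N)).trace :=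
      trace_mul_nonneg_of_posSemidef hD2 psdN
    have expand : ((((‖s‖ : ℝ) : ℂ) • 1 - s)) * (Nᴴ * N)
        = ((‖s‖ : ℝ) : ℂ) • (Nᴴ * N) - s * (Nᴴ * N) := by
      rw [Matrix.sub_mul, Matrix.smul_mul, Matrix.one_mul]
    rw [expand, Matrix.trace_sub, Matrix.trace_smul, smul_eq_mul, sub_nonneg] at h0
    exact h0
  have hr1 : (0 : ℂ) ≤ ((‖s⁻¹‖ : ℝ) : ℂ) := by
    rw [Complex.zero_le_real]; exact norm_nonneg _
  calc (h * xᴴ * x).trace = (s * (Nᴴ * (s⁻¹ * N))).trace := e2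
    _ ≤ ((‖s⁻¹‖ : ℝ) : ℂ) * (s * (Nᴴ * N)).trace := stepA
    _ ≤ ((‖s⁻¹‖ : ℝ) : ℂ) * (((‖s‖ : ℝ) : ℂ) * (Nᴴ * N).trace) :=
        mul_le_mul_of_nonneg_left stepB hr1
    _ = ((‖s⁻¹‖ * ‖s‖ : ℝ) : ℂ) * (q * xᴴ * s * x * q).trace := by
        rw [key0, Complex.ofReal_mul, mul_assoc]
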